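/- Hölder continuity of the nonlinear term along the solution (scalar model): let a ≤ 0 and let g : (0,T] → ℝ be differentiable with |g'(t)| ≤ B t^{−1}. Then for 0 < t < t + h ≤ T, |g(t+h) − g(t)| ≤ B h / t, and consequently for any μ ∈ [0,1) the integral ∫₀^t |a|^{1+μ} e^{−(t−ξ)|a|} |g(ξ) − g(t)| dξ converges and is bounded by C t^{−μ} log-free in a, with C depending on B, μ, T. -/

import Mathlib

open Set

/-- MVT bound: if `|g'| ≤ B/s` on `[s,u] ⊆ (0,T]` then `|g u - g s| ≤ B s⁻¹ (u-s)`. -/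
lemma hcs_mvt_aux (B T : ℝ) (hB : 0 ≤ B) (g g' : ℝ → ℝ)
    (hg : ∀ t ∈ Ioc (0:ℝ) T, HasDerivAt g (g' t) t)
    (hg' : ∀ t ∈ Ioc (0:ℝ) T, |g' t| ≤ B * t⁻¹)
    {s u : ℝ} (hs : 0 < s) (hsu : s ≤ u) (huT : u ≤ T) :
    |g u - g s| ≤ B * s⁻¹ * (u - s) := by
  have key := (convex_Icc s u).norm_image_sub_le_of_norm_hasDerivWithin_le
    (f := g) (f' := g') (C := B * s⁻¹)
    (fun x hx => (hg x ⟨hs.trans_le hx.1, hx.2.trans huT⟩).hasDerivWithinAt)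
    (fun x hx => by
      have h1 := hg' x ⟨hs.trans_le hx.1, hx.2.trans huT⟩
      have h2 : x⁻¹ ≤ s⁻¹ := inv_anti₀ hs hx.1
      calc ‖g' x‖ = |g' x| := Real.norm_eq_abs _
        _ ≤ B * x⁻¹ := h1
        _ ≤ B * s⁻¹ := by nlinarith)
    ⟨le_refl s, hsu⟩ ⟨hsu, le_refl u⟩
  rwa [Real.norm_eq_abs, Real.norm_eq_abs, abs_of_nonneg (sub_nonneg.2 hsu)] at key

/-- Logarithmic modulus of continuity. -/
lemma hcs_log_aux (B T : ℝ) (hB : 0 ≤ B) (g g' : ℝ → ℝ)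
    (hg : ∀ t ∈ Ioc (0:ℝ) T, HasDerivAt g (g' t) t)
    (hg' : ∀ t ∈ Ioc (0:ℝ) T, |g' t| ≤ B * t⁻¹)
    {s u : ℝ} (hs : 0 < s) (hsu : s ≤ u) (huT : u ≤ T) :
    |g u - g s| ≤ B * (Real.log u - Real.log s) := by
  have hu : 0 < u := hs.trans_le hsu
  have hmem : ∀ x ∈ Icc (Real.log s) (Real.log u), Real.exp x ∈ Ioc (0:ℝ) T := by
    intro x hx
    refine ⟨Real.exp_pos x, ?_⟩
    calc Real.exp x ≤ Real.exp (Real.log u) := Real.exp_le_exp.2 hx.2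
      _ = u := Real.exp_log hu
      _ ≤ T := huT
  have key := (convex_Icc (Real.log s) (Real.log u)).norm_image_sub_le_of_norm_hasDerivWithin_le
    (f := fun x => g (Real.exp x)) (f' := fun x => g' (Real.exp x) * Real.exp x) (C := B)
    (fun x hx => ((hg _ (hmem x hx)).comp x (Real.hasDerivAt_exp x)).hasDerivWithinAt)
    (fun x hx => by
      have h1 := hg' _ (hmem x hx)
      have hex : (0:ℝ) < Real.exp x := Real.exp_pos x
      calc ‖g' (Real.exp x) * Real.exp x‖ = |g' (Real.exp x)| * Real.exp x := by
            rw [Real.norm_eq_abs, abs_mul, abs_of_pos hex]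
        _ ≤ (B * (Real.exp x)⁻¹) * Real.exp x := by
            apply mul_le_mul_of_nonneg_right h1 hex.le
        _ = B := by field_simp)
    ⟨le_refl _, Real.log_le_log hs hsu⟩ ⟨Real.log_le_log hs hsu, le_refl _⟩
  simp only [Real.exp_log hu, Real.exp_log hs, Real.norm_eq_abs] at key
  rwa [abs_of_nonneg (sub_nonneg.2 (Real.log_le_log hs hsu))] at key

/-- `u^(1+μ) e^{-u} ≤ 5`. -/
lemma hcs_pow_exp_le (μ u : ℝ) (hμ0 : 0 ≤ μ) (hμ1 : μ < 1) (hu : 0 ≤ u) :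
    u ^ (1 + μ) * Real.exp (-u) ≤ 5 := by
  have h1 : u ^ (1 + μ) ≤ 1 + u ^ 2 := by
    rcases le_total u 1 with h | h
    · have := Real.rpow_le_one hu h (by linarith : (0:ℝ) ≤ 1 + μ)
      nlinarith [sq_nonneg u]
    · have h2 : u ^ (1 + μ) ≤ u ^ ((2:ℕ) : ℝ) :=
        Real.rpow_le_rpow_of_exponent_le h (by push_cast; linarith)
      rw [Real.rpow_natCast] at h2
      nlinarith
  have e2 : Real.exp (u/2) * Real.exp (u/2) = Real.exp u := by
    rw [← Real.exp_add]; ring_nf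
  have e3 : u/2 + 1 ≤ Real.exp (u/2) := Real.add_one_le_exp _
  have e4 : (1:ℝ) ≤ Real.exp u := Real.one_le_exp hu
  have h2 : 1 + u ^ 2 ≤ 5 * Real.exp u := by nlinarith
  have hexp : Real.exp (-u) = (Real.exp u)⁻¹ := Real.exp_neg u
  have hpos : (0:ℝ) < Real.exp u := Real.exp_pos u
  calc u ^ (1 + μ) * Real.exp (-u) ≤ (1 + u ^ 2) * Real.exp (-u) := by
        apply mul_le_mul_of_nonneg_right h1 (Real.exp_pos _).le
    _ ≤ (5 * Real.exp u) * Real.exp (-u) := by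
        apply mul_le_mul_of_nonneg_right h2 (Real.exp_pos _).le
    _ = 5 := by rw [hexp]; field_simp

lemma hcs_kernel_bound (μ : ℝ) (hμ0 : 0 ≤ μ) (hμ1 : μ < 1) {c s : ℝ} (hc : 0 ≤ c) (hs : 0 < s) :
    c ^ (1 + μ) * Real.exp (-(s * c)) ≤ 5 * s ^ (-(1 + μ)) := by
  have h := hcs_pow_exp_le μ (s * c) hμ0 hμ1 (by positivity)
  rw [Real.mul_rpow hs.le hc] at h
  have hsp : (0:ℝ) < s ^ (1 + μ) := Real.rpow_pos_of_pos hs _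
  rw [Real.rpow_neg hs.le]
  calc c ^ (1 + μ) * Real.exp (-(s * c))
      = (s ^ (1 + μ) * c ^ (1 + μ) * Real.exp (-(s * c))) * (s ^ (1 + μ))⁻¹ := by
        field_simp
    _ ≤ 5 * (s ^ (1 + μ))⁻¹ := by
        apply mul_le_mul_of_nonneg_right _ (inv_nonneg.2 hsp.le)
        exact h

lemma hcs_kernel_bound' (μ : ℝ) (hμ0 : 0 ≤ μ) (hμ1 : μ < 1) {c s : ℝ} (hc : 0 ≤ c) (hs : 0 < s) :
    c ^ (1 + μ) * s * Real.exp (-(s * c)) ≤ 5 * s ^ (-μ) := by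
  have h := hcs_kernel_bound μ hμ0 hμ1 hc hs
  have h2 : (c ^ (1 + μ) * Real.exp (-(s * c))) * s ≤ (5 * s ^ (-(1 + μ))) * s :=
    mul_le_mul_of_nonneg_right h hs.le
  have e : s ^ (-(1 + μ)) * s = s ^ (-μ) := by
    nth_rewrite 2 [show s = s ^ (1:ℝ) from (Real.rpow_one s).symm]
    rw [← Real.rpow_add hs]
    norm_num
  calc c ^ (1 + μ) * s * Real.exp (-(s * c))
      = (c ^ (1 + μ) * Real.exp (-(s * c))) * s := by ring
    _ ≤ (5 * s ^ (-(1 + μ))) * s := h2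
    _ = 5 * s ^ (-μ) := by rw [mul_assoc, e]
theorem holder_continuity_and_singular_integral_bound
    (B T : ℝ) (hB : 0 ≤ B) (hT : 0 < T)
    (g g' : ℝ → ℝ) (hg : ∀ t ∈ Ioc (0:ℝ) T, HasDerivAt g (g' t) t)
    (hg' : ∀ t ∈ Ioc (0:ℝ) T, |g' t| ≤ B * t⁻¹) :
    (∀ t h : ℝ, 0 < t → 0 < h → t + h ≤ T → |g (t + h) - g t| ≤ B * h / t) ∧
    (∀ μ : ℝ, 0 ≤ μ → μ < 1 → ∃ C > 0, ∀ a : ℝ, a ≤ 0 → ∀ t ∈ Ioc (0:ℝ) T,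
      IntervalIntegrable
        (fun ξ => |a| ^ (1 + μ) * Real.exp (-((t - ξ) * |a|)) * |g ξ - g t|)
        MeasureTheory.volume 0 t ∧
      (∫ ξ in (0:ℝ)..t, |a| ^ (1 + μ) * Real.exp (-((t - ξ) * |a|)) * |g ξ - g t|) ≤
        C * t ^ (-μ)) := by
  constructor
  · intro t h ht hh hth
    have key := hcs_mvt_aux B T hB g g' hg hg' (s := t) (u := t + h) ht (by linarith) hth
    calc |g (t + h) - g t| ≤ B * t⁻¹ * (t + h - t) := key
      _ = B * h / t := by rw [div_eq_mul_inv]; ring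
  · intro μ hμ0 hμ1
    have hd : (0:ℝ) < 1 - μ := by linarith
    refine ⟨100 * (B + 1) / (1 - μ), div_pos (by linarith) hd, ?_⟩
    intro a ha t ht
    obtain ⟨ht0, htT⟩ := ht
    set f : ℝ → ℝ := fun ξ => |a| ^ (1 + μ) * Real.exp (-((t - ξ) * |a|)) * |g ξ - g t|
      with hf_def
    have hth : (0:ℝ) < t / 2 := by linarith
    -- continuity of f on Ioo 0 t
    have hgc : ContinuousOn g (Ioo 0 t) := fun x hx =>
      ((hg x ⟨hx.1, hx.2.le.trans htT⟩).continuousAt).continuousWithinAt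
    have hcont : ContinuousOn f (Ioo 0 t) := by
      apply ContinuousOn.mul
      · exact (Continuous.continuousOn (by fun_prop))
      · exact (hgc.sub continuousOn_const).abs
    have hfnonneg : ∀ ξ, 0 ≤ f ξ := by intro ξ; simp only [hf_def]; positivity
    -- pointwise bound on (0, t/2)
    set c₁ : ℝ := 10 * B * Real.sqrt t * (t / 2) ^ (-(1 + μ)) with hc₁
    have hb1 : ∀ ξ ∈ Ioo (0:ℝ) (t/2), f ξ ≤ c₁ * ξ ^ (-(1/2 : ℝ)) := by
      intro ξ hξ
      obtain ⟨hξ0, hξh⟩ := hξ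
      have hξt : ξ < t := by linarith
      have hlog := hcs_log_aux B T hB g g' hg hg' (s := ξ) (u := t) hξ0 hξt.le htT
      rw [abs_sub_comm] at hlog
      have hlog2 : Real.log t - Real.log ξ ≤ 2 * (Real.sqrt t * ξ ^ (-(1/2:ℝ))) := by
        have h1 : Real.log t - Real.log ξ = Real.log (t / ξ) :=
          (Real.log_div ht0.ne' hξ0.ne').symm
        have h2 : Real.log (t / ξ) ≤ (t / ξ) ^ ((1:ℝ)/2) / ((1:ℝ)/2) :=
          Real.log_le_rpow_div (by positivity) (by norm_num)
        have h3 : (t / ξ) ^ ((1:ℝ)/2) = Real.sqrt t * ξ ^ (-(1/2:ℝ)) := by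
          rw [Real.div_rpow ht0.le hξ0.le, Real.sqrt_eq_rpow, Real.rpow_neg hξ0.le,
            div_eq_mul_inv, one_div]
        rw [h1, ← h3]
        calc Real.log (t / ξ) ≤ (t / ξ) ^ ((1:ℝ)/2) / ((1:ℝ)/2) := h2
          _ = 2 * (t / ξ) ^ ((1:ℝ)/2) := by ring
      have hG : |g ξ - g t| ≤ 2 * B * (Real.sqrt t * ξ ^ (-(1/2:ℝ))) := by
        calc |g ξ - g t| ≤ B * (Real.log t - Real.log ξ) := hlog
          _ ≤ B * (2 * (Real.sqrt t * ξ ^ (-(1/2:ℝ)))) :=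
            mul_le_mul_of_nonneg_left hlog2 hB
          _ = 2 * B * (Real.sqrt t * ξ ^ (-(1/2:ℝ))) := by ring
      have hE : |a| ^ (1 + μ) * Real.exp (-((t - ξ) * |a|)) ≤ 5 * (t/2) ^ (-(1 + μ)) := by
        calc |a| ^ (1 + μ) * Real.exp (-((t - ξ) * |a|))
            ≤ 5 * (t - ξ) ^ (-(1 + μ)) :=
              hcs_kernel_bound μ hμ0 hμ1 (abs_nonneg a) (by linarith)
          _ ≤ 5 * (t/2) ^ (-(1 + μ)) := by
              have := Real.rpow_le_rpow_of_nonpos hth (by linarith : t/2 ≤ t - ξ)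
                (by linarith : -(1 + μ) ≤ 0)
              linarith
      calc f ξ = (|a| ^ (1 + μ) * Real.exp (-((t - ξ) * |a|))) * |g ξ - g t| := rfl
        _ ≤ (5 * (t/2) ^ (-(1 + μ))) * (2 * B * (Real.sqrt t * ξ ^ (-(1/2:ℝ)))) := by
            apply mul_le_mul hE hG (abs_nonneg _) (by positivity)
        _ = c₁ * ξ ^ (-(1/2:ℝ)) := by rw [hc₁]; ring
    -- pointwise bound on (t/2, t)
    have hb2 : ∀ ξ ∈ Ioo (t/2) t, f ξ ≤ (10 * B / t) * (t - ξ) ^ (-μ) := by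
      intro ξ hξ
      obtain ⟨hξh, hξt⟩ := hξ
      have hξ0 : 0 < ξ := lt_trans hth hξh
      have hmvt := hcs_mvt_aux B T hB g g' hg hg' (s := ξ) (u := t) hξ0 hξt.le htT
      rw [abs_sub_comm] at hmvt
      have hinv : ξ⁻¹ ≤ (t/2)⁻¹ := inv_anti₀ hth hξh.le
      have hG : |g ξ - g t| ≤ (2 * B / t) * (t - ξ) := by
        calc |g ξ - g t| ≤ B * ξ⁻¹ * (t - ξ) := hmvt
          _ ≤ B * (t/2)⁻¹ * (t - ξ) := by
              apply mul_le_mul_of_nonneg_right _ (by linarith)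
              exact mul_le_mul_of_nonneg_left hinv hB
          _ = (2 * B / t) * (t - ξ) := by
              field_simp
      have hK := hcs_kernel_bound' μ hμ0 hμ1 (c := |a|) (s := t - ξ)
        (abs_nonneg a) (by linarith)
      calc f ξ = (|a| ^ (1 + μ) * Real.exp (-((t - ξ) * |a|))) * |g ξ - g t| := rfl
        _ ≤ (|a| ^ (1 + μ) * Real.exp (-((t - ξ) * |a|))) * ((2 * B / t) * (t - ξ)) := by
            apply mul_le_mul_of_nonneg_left hG (by positivity)
        _ = (2 * B / t) * (|a| ^ (1 + μ) * (t - ξ) * Real.exp (-((t - ξ) * |a|))) := by ring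
        _ ≤ (2 * B / t) * (5 * (t - ξ) ^ (-μ)) := by
            apply mul_le_mul_of_nonneg_left hK (by positivity)
        _ = (10 * B / t) * (t - ξ) ^ (-μ) := by ring
    -- integrability of dominating functions
    have hD1 : IntervalIntegrable (fun ξ => c₁ * ξ ^ (-(1/2:ℝ)))
        MeasureTheory.volume 0 (t/2) :=
      (intervalIntegral.intervalIntegrable_rpow' (by norm_num)).const_mul c₁
    have hD2 : IntervalIntegrable (fun ξ => (10 * B / t) * (t - ξ) ^ (-μ))
        MeasureTheory.volume (t/2) t := by
      have h := (intervalIntegral.intervalIntegrable_rpow' (r := -μ)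
        (by linarith)).comp_sub_left (a := 0) (b := t/2) t
      rw [show t - t/2 = t/2 from by ring, sub_zero] at h
      exact h.symm.const_mul _
    have hsub1 : Ioo (0:ℝ) (t/2) ⊆ Ioo 0 t := Ioo_subset_Ioo le_rfl (by linarith)
    have hsub2 : Ioo (t/2) t ⊆ Ioo 0 t := Ioo_subset_Ioo (by linarith) le_rfl
    have hmeasf1 : MeasureTheory.AEStronglyMeasurable f
        (MeasureTheory.volume.restrict (Ioo 0 (t/2))) :=
      (hcont.mono hsub1).aestronglyMeasurable measurableSet_Ioo
    have hmeasf2 : MeasureTheory.AEStronglyMeasurable f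
        (MeasureTheory.volume.restrict (Ioo (t/2) t)) :=
      (hcont.mono hsub2).aestronglyMeasurable measurableSet_Ioo
    have hD1' : MeasureTheory.IntegrableOn (fun ξ => c₁ * ξ ^ (-(1/2:ℝ))) (Ioo 0 (t/2)) := by
      have h := (intervalIntegrable_iff_integrableOn_Ioc_of_le (by linarith : (0:ℝ) ≤ t/2)).1 hD1
      rwa [integrableOn_Ioc_iff_integrableOn_Ioo] at h
    have hD2' : MeasureTheory.IntegrableOn (fun ξ => (10 * B / t) * (t - ξ) ^ (-μ))
        (Ioo (t/2) t) := by
      have h := (intervalIntegrable_iff_integrableOn_Ioc_of_le (by linarith : t/2 ≤ t)).1 hD2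
      rwa [integrableOn_Ioc_iff_integrableOn_Ioo] at h
    have hf1' : MeasureTheory.IntegrableOn f (Ioo 0 (t/2)) := by
      apply MeasureTheory.Integrable.mono hD1' hmeasf1
      rw [MeasureTheory.ae_restrict_iff' measurableSet_Ioo]
      filter_upwards with ξ hξ
      rw [Real.norm_eq_abs, Real.norm_eq_abs, abs_of_nonneg (hfnonneg ξ)]
      exact (hb1 ξ hξ).trans (le_abs_self _)
    have hf2' : MeasureTheory.IntegrableOn f (Ioo (t/2) t) := by
      apply MeasureTheory.Integrable.mono hD2' hmeasf2
      rw [MeasureTheory.ae_restrict_iff' measurableSet_Ioo]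
      filter_upwards with ξ hξ
      rw [Real.norm_eq_abs, Real.norm_eq_abs, abs_of_nonneg (hfnonneg ξ)]
      exact (hb2 ξ hξ).trans (le_abs_self _)
    have hfI1 : IntervalIntegrable f MeasureTheory.volume 0 (t/2) := by
      rw [intervalIntegrable_iff_integrableOn_Ioc_of_le (by linarith),
        integrableOn_Ioc_iff_integrableOn_Ioo]
      exact hf1'
    have hfI2 : IntervalIntegrable f MeasureTheory.volume (t/2) t := by
      rw [intervalIntegrable_iff_integrableOn_Ioc_of_le (by linarith),
        integrableOn_Ioc_iff_integrableOn_Ioo]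
      exact hf2'
    refine ⟨hfI1.trans hfI2, ?_⟩
    have hsplit : (∫ ξ in (0:ℝ)..t, f ξ)
        = (∫ ξ in (0:ℝ)..(t/2), f ξ) + ∫ ξ in (t/2)..t, f ξ :=
      (intervalIntegral.integral_add_adjacent_intervals hfI1 hfI2).symm
    have hI1 : (∫ ξ in (0:ℝ)..(t/2), f ξ) ≤ ∫ ξ in (0:ℝ)..(t/2), c₁ * ξ ^ (-(1/2:ℝ)) := by
      rw [intervalIntegral.integral_of_le (by linarith : (0:ℝ) ≤ t/2),
        intervalIntegral.integral_of_le (by linarith : (0:ℝ) ≤ t/2),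
        MeasureTheory.integral_Ioc_eq_integral_Ioo, MeasureTheory.integral_Ioc_eq_integral_Ioo]
      exact MeasureTheory.setIntegral_mono_on hf1' hD1' measurableSet_Ioo hb1
    have hI2 : (∫ ξ in (t/2)..t, f ξ) ≤ ∫ ξ in (t/2)..t, (10 * B / t) * (t - ξ) ^ (-μ) := by
      rw [intervalIntegral.integral_of_le (by linarith : t/2 ≤ t),
        intervalIntegral.integral_of_le (by linarith : t/2 ≤ t),
        MeasureTheory.integral_Ioc_eq_integral_Ioo, MeasureTheory.integral_Ioc_eq_integral_Ioo]
      exact MeasureTheory.setIntegral_mono_on hf2' hD2' measurableSet_Ioo hb2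
    have hval1 : (∫ ξ in (0:ℝ)..(t/2), c₁ * ξ ^ (-(1/2:ℝ)))
        = c₁ * (2 * (t/2) ^ ((1:ℝ)/2)) := by
      rw [intervalIntegral.integral_const_mul, integral_rpow (Or.inl (by norm_num))]
      norm_num [Real.zero_rpow]
      exact Or.inl (by ring)
    have hval2 : (∫ ξ in (t/2)..t, (10 * B / t) * (t - ξ) ^ (-μ))
        = (10 * B / t) * ((t/2) ^ (1 - μ) / (1 - μ)) := by
      rw [intervalIntegral.integral_const_mul]
      have h := intervalIntegral.integral_comp_sub_left (a := t/2) (b := t)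
        (fun x => x ^ (-μ)) t
      rw [h, show t - t = (0:ℝ) from by ring, show t - t/2 = t/2 from by ring,
        integral_rpow (Or.inl (by linarith)),
        Real.zero_rpow (ne_of_gt (by linarith : (0:ℝ) < -μ + 1)),
        show -μ + 1 = 1 - μ from by ring, sub_zero]
    -- rpow algebra for the first piece
    have e1 : Real.sqrt t = t ^ ((1:ℝ)/2) := Real.sqrt_eq_rpow t
    have e2 : (t/2) ^ (-(1+μ)) * (t/2) ^ ((1:ℝ)/2) = (t/2) ^ (-(1/2:ℝ) - μ) := by
      rw [← Real.rpow_add hth]; congr 1; ring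
    have e3 : (t/2) ^ (-(1/2:ℝ) - μ) = t ^ (-(1/2:ℝ) - μ) * 2 ^ ((1/2:ℝ) + μ) := by
      rw [Real.div_rpow ht0.le (by norm_num : (0:ℝ) ≤ 2), div_eq_mul_inv,
        ← Real.rpow_neg (by norm_num : (0:ℝ) ≤ 2)]
      congr 1; ring
    have e4 : t ^ ((1:ℝ)/2) * t ^ (-(1/2:ℝ) - μ) = t ^ (-μ) := by
      rw [← Real.rpow_add ht0]; congr 1; ring
    have e5 : (2:ℝ) ^ ((1/2:ℝ) + μ) ≤ 4 := by
      have h1 : (2:ℝ) ^ ((1/2:ℝ) + μ) ≤ (2:ℝ) ^ (2:ℝ) :=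
        Real.rpow_le_rpow_of_exponent_le one_le_two (by linarith)
      have h2 := Real.rpow_natCast (2:ℝ) 2
      norm_num at h2
      linarith
    have hI1' : c₁ * (2 * (t/2) ^ ((1:ℝ)/2)) ≤ 80 * B * t ^ (-μ) := by
      calc c₁ * (2 * (t/2) ^ ((1:ℝ)/2))
          = 20 * B * (t ^ ((1:ℝ)/2) * ((t/2) ^ (-(1+μ)) * (t/2) ^ ((1:ℝ)/2))) := by
            rw [hc₁, e1]; ring
        _ = 20 * B * (t ^ (-μ) * 2 ^ ((1/2:ℝ) + μ)) := by
            have e24 : t ^ ((1:ℝ)/2) * ((t/2) ^ (-(1+μ)) * (t/2) ^ ((1:ℝ)/2))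
                = t ^ (-μ) * 2 ^ ((1/2:ℝ) + μ) := by
              rw [e2, e3, ← mul_assoc, e4]
            rw [← e24]
        _ ≤ 20 * B * (t ^ (-μ) * 4) := by
            apply mul_le_mul_of_nonneg_left _ (by positivity)
            exact mul_le_mul_of_nonneg_left e5 (Real.rpow_pos_of_pos ht0 _).le
        _ = 80 * B * t ^ (-μ) := by ring
    have hI2' : (10 * B / t) * ((t/2) ^ (1 - μ) / (1 - μ)) ≤ (10 * B / (1 - μ)) * t ^ (-μ) := by
      have e6 : (t/2) ^ (1 - μ) ≤ t ^ (1 - μ) :=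
        Real.rpow_le_rpow (by positivity) (by linarith) (by linarith)
      have e7 : t⁻¹ * t ^ (1 - μ) = t ^ (-μ) := by
        nth_rewrite 1 [show t⁻¹ = t ^ (-1:ℝ) from (Real.rpow_neg_one t).symm]
        rw [← Real.rpow_add ht0]; congr 1; ring
      calc (10 * B / t) * ((t/2) ^ (1 - μ) / (1 - μ))
          ≤ (10 * B / t) * (t ^ (1 - μ) / (1 - μ)) := by
            gcongr
        _ = (10 * B / (1 - μ)) * (t⁻¹ * t ^ (1 - μ)) := by
            simp only [div_eq_mul_inv]; ring
        _ = (10 * B / (1 - μ)) * t ^ (-μ) := by rw [e7]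
    have hpow : (0:ℝ) < t ^ (-μ) := Real.rpow_pos_of_pos ht0 _
    have hfin : 80 * B * t ^ (-μ) + (10 * B / (1 - μ)) * t ^ (-μ)
        ≤ 100 * (B + 1) / (1 - μ) * t ^ (-μ) := by
      have e : 100 * (B + 1) / (1 - μ) * t ^ (-μ)
          - (80 * B * t ^ (-μ) + (10 * B / (1 - μ)) * t ^ (-μ))
          = ((100 * (B + 1) - 10 * B - 80 * B * (1 - μ)) * t ^ (-μ)) / (1 - μ) := by
        field_simp; ring
      have hnum : (0:ℝ) ≤ ((100 * (B + 1) - 10 * B - 80 * B * (1 - μ)) * t ^ (-μ)) / (1 - μ) :=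
        div_nonneg (mul_nonneg (by nlinarith) hpow.le) hd.le
      linarith
    calc (∫ ξ in (0:ℝ)..t, f ξ)
        = (∫ ξ in (0:ℝ)..(t/2), f ξ) + ∫ ξ in (t/2)..t, f ξ := hsplit
      _ ≤ (c₁ * (2 * (t/2) ^ ((1:ℝ)/2))) + ((10 * B / t) * ((t/2) ^ (1 - μ) / (1 - μ))) := by
          rw [← hval1, ← hval2]; exact add_le_add hI1 hI2
      _ ≤ 80 * B * t ^ (-μ) + (10 * B / (1 - μ)) * t ^ (-μ) := add_le_add hI1' hI2'
      _ ≤ 100 * (B + 1) / (1 - μ) * t ^ (-μ) := hfin
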